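/- Let R be a language over Σ' and ≡ denote syntactic equivalence with respect to R. Suppose words e_L, e, e_R satisfy e_L·e_L ≡ e_L, e_R·e_R ≡ e_R, e·e_L ≡ e, and e_R·e ≡ e. Then for any letters t₁,…,t_n ∈ Σ' and exponents l₁ ≥ 1, r_n ≥ 1, and l₂,…,l_n, r₁,…,r_{n-1} ≥ 0, the word e_L^{l₁} t₁ e_R^{r₁} e e_L^{l₂} t₂ e_R^{r₂} e … e e_L^{l_n} t_n e_R^{r_n} is syntactically equivalent to e_L t₁ e t₂ e … e t_n e_R. -/

import Mathlib

/-- Syntactic equivalence of two words with respect to a language `R`. -/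
def SynEq {α : Type*} (R : Set (List α)) (w w' : List α) : Prop :=
  ∀ v x : List α, v ++ w ++ x ∈ R ↔ v ++ w' ++ x ∈ R

/-- `wpow w n` is the `n`-fold concatenation of the word `w` with itself. -/
def wpow {α : Type*} (w : List α) : ℕ → List α
  | 0 => []
  | n + 1 => w ++ wpow w n

section aux

variable {α : Type*} {R : Set (List α)}

lemma synEq_refl (w : List α) : SynEq R w w := fun _ _ => Iff.rfl

lemma synEq_symm {w w' : List α} (h : SynEq R w w') : SynEq R w' w :=
  fun v x => (h v x).symm

lemma synEq_trans {w w' w'' : List α} (h : SynEq R w w') (h' : SynEq R w' w'') :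
    SynEq R w w'' := fun v x => (h v x).trans (h' v x)

lemma synEq_congr {w w' : List α} (u x : List α) (h : SynEq R w w') :
    SynEq R (u ++ w ++ x) (u ++ w' ++ x) := by
  intro v y
  have := h (v ++ u) (x ++ y)
  simpa [List.append_assoc] using this

lemma intercalate_cons₂ (sep a b : List α) (L : List (List α)) :
    List.intercalate sep (a :: b :: L) = a ++ sep ++ List.intercalate sep (b :: L) := by
  simp [List.intercalate, List.intersperse, List.append_assoc]

lemma intercalate_single (sep a : List α) :
    List.intercalate sep [a] = a := by
  simp [List.intercalate]

variable {eL e eR : List α}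

lemma wpow_synEq_self (hLL : SynEq R (eL ++ eL) eL) :
    ∀ k, 1 ≤ k → SynEq R (wpow eL k) eL := by
  intro k hk
  induction k with
  | zero => omega
  | succ n ih =>
    rcases Nat.eq_or_lt_of_le hk with h | h
    · obtain rfl : n = 0 := by omega
      simpa [wpow] using synEq_refl (R := R) eL
    · have h1 : SynEq R (wpow eL (n + 1)) (eL ++ eL) := by
        have := synEq_congr (R := R) eL [] (ih (by omega))
        simpa [wpow] using this
      exact synEq_trans h1 hLL

lemma e_absorb_left (heL : SynEq R (e ++ eL) e) :
    ∀ k, SynEq R (e ++ wpow eL k) e := by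
  intro k
  induction k with
  | zero => simpa [wpow] using synEq_refl (R := R) e
  | succ n ih =>
    have h1 : SynEq R (e ++ wpow eL (n + 1)) (e ++ wpow eL n) := by
      have := synEq_congr (R := R) [] (wpow eL n) heL
      simpa [wpow, List.append_assoc] using this
    exact synEq_trans h1 ih

lemma e_absorb_right (hRe : SynEq R (eR ++ e) e) :
    ∀ k, SynEq R (wpow eR k ++ e) e := by
  intro k
  induction k with
  | zero => simpa [wpow] using synEq_refl (R := R) e
  | succ n ih =>
    have h1 : SynEq R (wpow eR (n + 1) ++ e) (eR ++ e) := by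
      have := synEq_congr (R := R) eR [] ih
      simpa [wpow, List.append_assoc] using this
    exact synEq_trans h1 hRe

/-- The pumped block for a triple `(l, t, r)`. -/
def pblock (eL eR : List α) (p : ℕ × α × ℕ) : List α :=
  wpow eL p.1 ++ [p.2.1] ++ wpow eR p.2.2

/-- Suffix lemma: with a preceding `e`, a nonempty run of blocks whose last
right exponent is positive collapses. -/
lemma suffix_collapse (hRR : SynEq R (eR ++ eR) eR) (heL : SynEq R (e ++ eL) e)
    (hRe : SynEq R (eR ++ e) e) :
    ∀ (M : List (ℕ × α × ℕ)) (hM : M ≠ []), 1 ≤ (M.getLast hM).2.2 →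
      SynEq R (e ++ List.intercalate e (M.map (pblock eL eR)))
        (e ++ List.intercalate e (M.map (fun p => [p.2.1])) ++ eR) := by
  intro M
  induction M with
  | nil => intro h; exact absurd rfl h
  | cons b M' ih =>
    intro _ hlast
    cases M' with
    | nil =>
      simp only [List.map_cons, List.map_nil, intercalate_single]
      obtain ⟨lb, tb, rb⟩ := b
      have hr : 1 ≤ rb := by simpa using hlast
      -- e ++ (eL^lb ++ [tb] ++ eR^rb) ≡ (e ++ eL^lb) ++ [tb] ++ eR^rb
      have h1 : SynEq R (e ++ pblock eL eR (lb, tb, rb)) ((e ++ [tb]) ++ wpow eR rb) := by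
        have := synEq_congr (R := R) [] ([tb] ++ wpow eR rb) (e_absorb_left heL lb)
        simpa [pblock, List.append_assoc] using this
      have h2 : SynEq R ((e ++ [tb]) ++ wpow eR rb) ((e ++ [tb]) ++ eR) := by
        have := synEq_congr (R := R) (e ++ [tb]) [] (wpow_synEq_self hRR rb hr)
        simpa using this
      have := synEq_trans h1 h2
      simpa [List.append_assoc] using this
    | cons c M'' =>
      have hne : (c :: M'') ≠ [] := by simp
      have hlast' : 1 ≤ ((c :: M'').getLast hne).2.2 := by
        simpa [List.getLast_cons hne] using hlast
      obtain ⟨lb, tb, rb⟩ := b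
      -- LHS = e ++ (block b ++ e ++ rest)
      have key := ih hne hlast'
      -- Step 1: absorb eL^lb into e
      have h1 : SynEq R
          (e ++ List.intercalate e ((((lb, tb, rb)) :: c :: M'').map (pblock eL eR)))
          (e ++ [tb] ++ wpow eR rb ++ e ++ List.intercalate e ((c :: M'').map (pblock eL eR))) := by
        simp only [List.map_cons, intercalate_cons₂]
        have := synEq_congr (R := R) []
          ([tb] ++ wpow eR rb ++ e ++ List.intercalate e ((c :: M'').map (pblock eL eR)))
          (e_absorb_left heL lb)
        simpa [pblock, List.append_assoc] using this
      -- Step 2: absorb eR^rb into e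
      have h2 : SynEq R
          (e ++ [tb] ++ wpow eR rb ++ e ++ List.intercalate e ((c :: M'').map (pblock eL eR)))
          (e ++ [tb] ++ (e ++ List.intercalate e ((c :: M'').map (pblock eL eR)))) := by
        have := synEq_congr (R := R) (e ++ [tb])
          (List.intercalate e ((c :: M'').map (pblock eL eR)))
          (e_absorb_right hRe rb)
        simpa [List.append_assoc] using this
      -- Step 3: IH
      have h3 : SynEq R
          (e ++ [tb] ++ (e ++ List.intercalate e ((c :: M'').map (pblock eL eR))))
          (e ++ [tb] ++ (e ++ List.intercalate e ((c :: M'').map (fun p => [p.2.1])) ++ eR)) := by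
        have := synEq_congr (R := R) (e ++ [tb]) [] key
        simpa [List.append_assoc] using this
      have := synEq_trans h1 (synEq_trans h2 h3)
      simp only [List.map_cons, intercalate_cons₂]
      simpa [List.append_assoc] using this

lemma full_collapse (hLL : SynEq R (eL ++ eL) eL) (hRR : SynEq R (eR ++ eR) eR)
    (heL : SynEq R (e ++ eL) e) (hRe : SynEq R (eR ++ e) e)
    (a : ℕ × α × ℕ) (M : List (ℕ × α × ℕ)) (ha : 1 ≤ a.1)
    (hlast : 1 ≤ ((a :: M).getLast (by simp)).2.2) :
    SynEq R (List.intercalate e ((a :: M).map (pblock eL eR)))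
      (eL ++ List.intercalate e ((a :: M).map (fun p => [p.2.1])) ++ eR) := by
  obtain ⟨la, ta, ra⟩ := a
  cases M with
  | nil =>
    have hr : 1 ≤ ra := by simpa using hlast
    simp only [List.map_cons, List.map_nil, intercalate_single]
    have h1 : SynEq R (pblock eL eR (la, ta, ra)) (eL ++ ([ta] ++ wpow eR ra)) := by
      have := synEq_congr (R := R) [] ([ta] ++ wpow eR ra)
        (wpow_synEq_self hLL la (by simpa using ha))
      simpa [pblock, List.append_assoc] using this
    have h2 : SynEq R (eL ++ ([ta] ++ wpow eR ra)) (eL ++ ([ta] ++ eR)) := by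
      have := synEq_congr (R := R) (eL ++ [ta]) [] (wpow_synEq_self hRR ra hr)
      simpa [List.append_assoc] using this
    have := synEq_trans h1 h2
    simpa [List.append_assoc] using this
  | cons c M'' =>
    have hne : (c :: M'') ≠ [] := by simp
    have hlast' : 1 ≤ ((c :: M'').getLast hne).2.2 := by
      simpa [List.getLast_cons hne] using hlast
    have key := suffix_collapse (R := R) hRR heL hRe (c :: M'') hne hlast'
    -- LHS = block a ++ e ++ rest
    have h1 : SynEq R
        (List.intercalate e (((la, ta, ra) :: c :: M'').map (pblock eL eR)))
        (eL ++ [ta] ++ wpow eR ra ++ e ++ List.intercalate e ((c :: M'').map (pblock eL eR))) := by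
      simp only [List.map_cons, intercalate_cons₂]
      have := synEq_congr (R := R) []
        ([ta] ++ wpow eR ra ++ e ++ List.intercalate e ((c :: M'').map (pblock eL eR)))
        (wpow_synEq_self hLL la (by simpa using ha))
      simpa [pblock, List.append_assoc] using this
    have h2 : SynEq R
        (eL ++ [ta] ++ wpow eR ra ++ e ++ List.intercalate e ((c :: M'').map (pblock eL eR)))
        (eL ++ [ta] ++ (e ++ List.intercalate e ((c :: M'').map (pblock eL eR)))) := by
      have := synEq_congr (R := R) (eL ++ [ta])
        (List.intercalate e ((c :: M'').map (pblock eL eR)))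
        (e_absorb_right hRe ra)
      simpa [List.append_assoc] using this
    have h3 : SynEq R
        (eL ++ [ta] ++ (e ++ List.intercalate e ((c :: M'').map (pblock eL eR))))
        (eL ++ [ta] ++ (e ++ List.intercalate e ((c :: M'').map (fun p => [p.2.1])) ++ eR)) := by
      have := synEq_congr (R := R) (eL ++ [ta]) [] key
      simpa [List.append_assoc] using this
    have := synEq_trans h1 (synEq_trans h2 h3)
    simp only [List.map_cons, intercalate_cons₂]
    simpa [List.append_assoc] using this

end aux

/-- If `e_L e_L ≡ e_L`, `e_R e_R ≡ e_R`, `e e_L ≡ e` and `e_R e ≡ e`, then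
`e_L^{l₁} t₁ e_R^{r₁} e e_L^{l₂} t₂ e_R^{r₂} e … e e_L^{l_n} t_n e_R^{r_n}`
is syntactically equivalent to `e_L t₁ e t₂ e … e t_n e_R`, provided `l₁ ≥ 1`
and `r_n ≥ 1`. -/
theorem pumped_word_synEq {α : Type*} (R : Set (List α)) (eL e eR : List α)
    (hLL : SynEq R (eL ++ eL) eL) (hRR : SynEq R (eR ++ eR) eR)
    (heL : SynEq R (e ++ eL) e) (hRe : SynEq R (eR ++ e) e)
    (m : ℕ) (t : Fin (m + 1) → α) (l r : Fin (m + 1) → ℕ)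
    (hl : 1 ≤ l 0) (hr : 1 ≤ r (Fin.last m)) :
    SynEq R
      (List.intercalate e
        (List.ofFn fun i => wpow eL (l i) ++ [t i] ++ wpow eR (r i)))
      (eL ++ List.intercalate e (List.ofFn fun i => [t i]) ++ eR) := by
  set f : Fin (m + 1) → ℕ × α × ℕ := fun i => (l i, t i, r i) with hf
  have hmap1 : (List.ofFn fun i => wpow eL (l i) ++ [t i] ++ wpow eR (r i))
      = (List.ofFn f).map (pblock eL eR) := by
    rw [List.map_ofFn]; rfl
  have hmap2 : (List.ofFn fun i : Fin (m + 1) => [t i])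
      = (List.ofFn f).map (fun p => [p.2.1]) := by
    rw [List.map_ofFn]; rfl
  rw [hmap1, hmap2]
  have hofn : List.ofFn f = f 0 :: List.ofFn (fun i => f i.succ) := List.ofFn_succ
  rw [hofn]
  have hgl : ∀ (L1 L2 : List (ℕ × α × ℕ)) (h1 : L1 ≠ []) (h2 : L2 ≠ []), L1 = L2 →
      L1.getLast h1 = L2.getLast h2 := by
    intro L1 L2 h1 h2 h
    subst h; rfl
  have hlast : 1 ≤ ((f 0 :: List.ofFn (fun i => f i.succ)).getLast (by simp)).2.2 := by
    rw [hgl _ (List.ofFn f) (by simp) (by simp) hofn.symm]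
    have h1 : (List.ofFn f).getLast (by simp) = f (Fin.last m) := by
      rw [List.getLast_ofFn]
      rfl
    rw [h1]
    exact hr
  exact full_collapse hLL hRR heL hRe (f 0) _ (by simpa [hf] using hl) hlast
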